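/- There exist exactly two elements j of the field ℚ(√509) satisfying 11⁵·j = −2140988208276499951039156514868631437312 ± 94897633897841092841200334676012564480·√509, and each such j is not rational (i.e., j ∉ ℚ). -/

import Mathlib

theorem exceptional_j_invariants_125 :
    ({j : ℝ | 11 ^ 5 * j = -2140988208276499951039156514868631437312
        + 94897633897841092841200334676012564480 * Real.sqrt 509 ∨
      11 ^ 5 * j = -2140988208276499951039156514868631437312
        - 94897633897841092841200334676012564480 * Real.sqrt 509}).ncard = 2 ∧
    ∀ j : ℝ, (11 ^ 5 * j = -2140988208276499951039156514868631437312
        + 94897633897841092841200334676012564480 * Real.sqrt 509 ∨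
      11 ^ 5 * j = -2140988208276499951039156514868631437312
        - 94897633897841092841200334676012564480 * Real.sqrt 509) →
      Irrational j := by
  have hp : Nat.Prime 509 := by norm_num
  have h509 : Irrational (Real.sqrt 509) := by
    have := hp.irrational_sqrt
    simpa using this
  have hspos : (0:ℝ) < Real.sqrt 509 := Real.sqrt_pos.mpr (by norm_num)
  set s := Real.sqrt 509 with hs
  set A : ℝ := -2140988208276499951039156514868631437312 with hA
  set B : ℝ := 94897633897841092841200334676012564480 with hB
  have hset : {j : ℝ | 11 ^ 5 * j = A + B * s ∨ 11 ^ 5 * j = A - B * s}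
      = {(A + B * s) / 11 ^ 5, (A - B * s) / 11 ^ 5} := by
    ext j
    simp only [Set.mem_setOf_eq, Set.mem_insert_iff, Set.mem_singleton_iff]
    constructor
    · rintro (h | h)
      · left; field_simp; linarith
      · right; field_simp; linarith
    · rintro (h | h)
      · left; rw [h]; ring
      · right; rw [h]; ring
  constructor
  · rw [hset]
    rw [Set.ncard_pair]
    intro h
    have : B * s = -(B * s) := by
      field_simp at h
      linarith
    nlinarith [hspos]
  · intro j hj
    have key : Irrational (11 ^ 5 * j) := by
      have h1 : Irrational (B * s) := by
        have := h509.ratCast_mul (show (94897633897841092841200334676012564480:ℚ) ≠ 0 by norm_num)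
        push_cast at this
        rw [hB]; exact this
      rcases hj with h | h
      · rw [h]
        have h2 := h1.ratCast_add (q := -2140988208276499951039156514868631437312)
        push_cast at h2
        rw [hA]
        exact h2
      · rw [h]
        have h2 := h1.neg.ratCast_add (q := -2140988208276499951039156514868631437312)
        push_cast at h2
        rw [hA]
        rw [sub_eq_add_neg]; exact h2
    intro ⟨q, hq⟩
    exact key ⟨11 ^ 5 * q, by push_cast [← hq]; ring⟩
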